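/- A closed convex cone K ⊆ ℝⁿ is facially dual complete if and only if for every proper face F of K, with L = span(F), the dual cone of F computed in the quotient space E*/L^⊥ equals the projection of K* onto that quotient: F|_L^* = Π_{E*/L^⊥}(K*). -/

import Mathlib

/- Common definitions following "Facially Dual Complete (Nice) cones and
lexicographic tangents" by V. Roshchina and L. Tunçel. -/

open Set Filter
open scoped Pointwise

local notation "⟪" x ", " y "⟫" => @inner ℝ _ _ x y

variable {E : Type*} [NormedAddCommGroup E] [InnerProductSpace ℝ E]

/-- The tangent cone to a set `C` at `x`: the closure of the cone of feasible
directions `{d : x + ε • d ∈ C for some ε > 0}`. -/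
def TangCone (x : E) (C : Set E) : Set E :=
  closure {d : E | ∃ ε : ℝ, 0 < ε ∧ x + ε • d ∈ C}

/-- `F` is a face of the convex set `C`: a closed convex subset such that any open
segment of `C` whose interior meets `F` has both endpoints in `F`. -/
def IsFaceOf (F C : Set E) : Prop :=
  F ⊆ C ∧ Convex ℝ F ∧ IsClosed F ∧
    ∀ x ∈ F, ∀ y ∈ C, ∀ z ∈ C, x ∈ openSegment ℝ y z → y ∈ F ∧ z ∈ F

/-- A proper face: a nonempty face different from the whole set. -/
def IsProperFaceOf (F C : Set E) : Prop := IsFaceOf F C ∧ F.Nonempty ∧ F ≠ C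

/-- The dual cone `K* = {s : ⟨s,x⟩ ≥ 0 for all x ∈ K}`. -/
def DualCone' (K : Set E) : Set E := {s : E | ∀ x ∈ K, 0 ≤ ⟪s, x⟫}

/-- `F^⊥ = {s : ⟨s,x⟩ = 0 for all x ∈ F}`. -/
def PerpOf (F : Set E) : Set E := {s : E | ∀ x ∈ F, ⟪s, x⟫ = 0}

/-- Facial dual completeness: `K* + F^⊥` is closed for every proper face `F` of `K`. -/
def IsFDC (K : Set E) : Prop :=
  ∀ F : Set E, IsProperFaceOf F K → IsClosed (DualCone' K + PerpOf F)

/-- Tangential exposure: `T(x;C) ∩ span F = T(x;F)` for every proper face `F` and `x ∈ F`. -/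
def TangentiallyExposed (C : Set E) : Prop :=
  ∀ F : Set E, IsProperFaceOf F C → ∀ x ∈ F,
    TangCone x C ∩ (Submodule.span ℝ F : Set E) = TangCone x F

/-- The family of all tangent cones of members of a family of sets. -/
def TangFamily (𝒦 : Set (Set E)) : Set (Set E) :=
  {T | ∃ C ∈ 𝒦, ∃ x ∈ C, T = TangCone x C}

/-- `𝒯^k(C)`: the `k`-fold iterated tangent-cone families of `C`;
its members are the lexicographic tangent cones (of order `k`) of `C`. -/
def TangIter (C : Set E) : ℕ → Set (Set E)
  | 0 => {C}
  | k + 1 => TangFamily (TangIter C k)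

/-- Strong tangential exposure: `C` and all of its lexicographic tangent cones are
tangentially exposed. -/
def StronglyTangentiallyExposed (C : Set E) : Prop :=
  ∀ k : ℕ, ∀ T ∈ TangIter C k, TangentiallyExposed T

/-- `F` is an exposed face of `C`: the set of maximizers over `C` of some linear functional. -/
def IsExposedFaceOf (F C : Set E) : Prop :=
  ∃ p : E, F = {x ∈ C | ∀ y ∈ C, ⟪p, y⟫ ≤ ⟪p, x⟫}

/-- `C` is facially exposed: every proper face of `C` is exposed. -/
def FaciallyExposed (C : Set E) : Prop :=
  ∀ F : Set E, IsProperFaceOf F C → IsExposedFaceOf F C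

/-- The normal cone to `C` at `x`. -/
def NormalCone' (x : E) (C : Set E) : Set E := {s : E | ∀ y ∈ C, ⟪s, y - x⟫ ≤ 0}

/-- The minimal face of `C` containing `S`. -/
def MinimalFace (S C : Set E) : Set E := ⋂₀ {F : Set E | IsFaceOf F C ∧ S ⊆ F}

/-- `K` is a cone: closed under positive scalar multiplication. -/
def IsConeSet (K : Set E) : Prop := ∀ c : ℝ, 0 < c → ∀ x ∈ K, c • x ∈ K

/-! ### Auxiliary lemmas -/

/-- A convex cone set determines a `ConvexCone`. -/
def setToCone (K : Set E) (hconv : Convex ℝ K) (hcone : IsConeSet K) : ConvexCone ℝ E where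
  carrier := K
  smul_mem' := fun {c} hc {x} hx => hcone c hc x hx
  add_mem' := fun {x} hx {y} hy => by
    have h1 : (1/2 : ℝ) • x + (1/2 : ℝ) • y ∈ K :=
      hconv hx hy (by norm_num) (by norm_num) (by norm_num)
    have h2 := hcone 2 (by norm_num) _ h1
    have h3 : (2:ℝ) • ((1/2 : ℝ) • x + (1/2 : ℝ) • y) = x + y := by
      rw [smul_add, smul_smul, smul_smul]; norm_num
    rwa [h3] at h2

/-- A closed convex cone set containing `0` determines a `ProperCone`. -/
def mkProperCone (S : Set E) (h0 : (0:E) ∈ S) (hcl : IsClosed S)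
    (hadd : ∀ x ∈ S, ∀ y ∈ S, x + y ∈ S) (hsm : IsConeSet S) : ProperCone ℝ E where
  carrier := S
  add_mem' := fun {x y} hx hy => hadd x hx y hy
  zero_mem' := h0
  smul_mem' := fun c x hx => by
    obtain ⟨r, hr⟩ := c
    show r • x ∈ S
    rcases hr.eq_or_lt with h | h
    · rw [← h, zero_smul]; exact h0
    · exact hsm r h x hx
  isClosed' := hcl

theorem zero_mem_of_coneSet {K : Set E} (hne : K.Nonempty) (hcl : IsClosed K)
    (hconv : Convex ℝ K) (hcone : IsConeSet K) : (0:E) ∈ K :=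
  ConvexCone.Pointed.of_nonempty_of_isClosed (C := setToCone K hconv hcone) hne hcl

theorem face_zero_mem {F K : Set E} (hcl : IsClosed K)
    (hconv : Convex ℝ K) (hcone : IsConeSet K) (hF : IsFaceOf F K) (hne : F.Nonempty) :
    (0:E) ∈ F := by
  obtain ⟨x, hx⟩ := hne
  have hxK : x ∈ K := hF.1 hx
  have h0K : (0:E) ∈ K := zero_mem_of_coneSet ⟨x, hxK⟩ hcl hconv hcone
  have h2x : (2:ℝ) • x ∈ K := hcone 2 (by norm_num) x hxK
  have hseg : x ∈ openSegment ℝ (0:E) ((2:ℝ) • x) :=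
    ⟨1/2, 1/2, by norm_num, by norm_num, by norm_num, by
      rw [smul_zero, zero_add, smul_smul]; norm_num⟩
  exact (hF.2.2.2 x hx 0 h0K _ h2x hseg).1

theorem face_double {F K : Set E} (hcl : IsClosed K)
    (hconv : Convex ℝ K) (hcone : IsConeSet K) (hF : IsFaceOf F K) {x : E} (hx : x ∈ F) :
    (2:ℝ) • x ∈ F := by
  have hxK : x ∈ K := hF.1 hx
  have h0K : (0:E) ∈ K := zero_mem_of_coneSet ⟨x, hxK⟩ hcl hconv hcone
  have h2x : (2:ℝ) • x ∈ K := hcone 2 (by norm_num) x hxK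
  have hseg : x ∈ openSegment ℝ (0:E) ((2:ℝ) • x) :=
    ⟨1/2, 1/2, by norm_num, by norm_num, by norm_num, by
      rw [smul_zero, zero_add, smul_smul]; norm_num⟩
  exact (hF.2.2.2 x hx 0 h0K _ h2x hseg).2

theorem face_coneSet {F K : Set E} (hcl : IsClosed K)
    (hconv : Convex ℝ K) (hcone : IsConeSet K) (hF : IsFaceOf F K) (hne : F.Nonempty) :
    IsConeSet F := by
  intro c hc x hx
  have h0F : (0:E) ∈ F := face_zero_mem hcl hconv hcone hF hne
  have hpow : ∀ m : ℕ, ((2:ℝ)^m) • x ∈ F := by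
    intro m
    induction m with
    | zero => simpa using hx
    | succ m ih =>
      have h := face_double hcl hconv hcone hF ih
      rw [smul_smul] at h
      have : (2:ℝ) * 2^m = 2^(m+1) := by ring
      rwa [this] at h
  obtain ⟨m, hm⟩ := pow_unbounded_of_one_lt c (by norm_num : (1:ℝ) < 2)
  have h2m : (0:ℝ) < 2^m := by positivity
  have h1 : 0 ≤ c / 2^m := by positivity
  have h2 : c / 2^m ≤ 1 := (div_le_one h2m).2 hm.le
  have hb : (0:ℝ) ≤ 1 - c / 2^m := by linarith
  have hab : c / 2^m + (1 - c / 2^m) = 1 := by ring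
  have := hF.2.1 (hpow m) h0F h1 hb hab
  rwa [smul_zero, add_zero, smul_smul, div_mul_cancel₀ _ (ne_of_gt h2m)] at this

theorem face_add {F K : Set E} (hcl : IsClosed K)
    (hconv : Convex ℝ K) (hcone : IsConeSet K) (hF : IsFaceOf F K) (hne : F.Nonempty)
    {x y : E} (hx : x ∈ F) (hy : y ∈ F) : x + y ∈ F := by
  have h1 : (1/2 : ℝ) • x + (1/2 : ℝ) • y ∈ F :=
    hF.2.1 hx hy (by norm_num) (by norm_num) (by norm_num)
  have h2 := face_coneSet hcl hconv hcone hF hne 2 (by norm_num) _ h1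
  have h3 : (2:ℝ) • ((1/2 : ℝ) • x + (1/2 : ℝ) • y) = x + y := by
    rw [smul_add, smul_smul, smul_smul]; norm_num
  rwa [h3] at h2

theorem span_face_sub {F K : Set E} (hcl : IsClosed K)
    (hconv : Convex ℝ K) (hcone : IsConeSet K) (hF : IsFaceOf F K) (hne : F.Nonempty) :
    ∀ y ∈ Submodule.span ℝ F, ∃ a ∈ F, ∃ b ∈ F, y = a - b := by
  have h0F : (0:E) ∈ F := face_zero_mem hcl hconv hcone hF hne
  have hFc : IsConeSet F := face_coneSet hcl hconv hcone hF hne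
  intro y hy
  induction hy using Submodule.span_induction with
  | mem x hx => exact ⟨x, hx, 0, h0F, by simp⟩
  | zero => exact ⟨0, h0F, 0, h0F, by simp⟩
  | add x y _ _ ihx ihy =>
    obtain ⟨a, ha, b, hb, rfl⟩ := ihx
    obtain ⟨c, hc, d, hd, rfl⟩ := ihy
    exact ⟨a + c, face_add hcl hconv hcone hF hne ha hc,
      b + d, face_add hcl hconv hcone hF hne hb hd, by abel⟩
  | smul r x _ ihx =>
    obtain ⟨a, ha, b, hb, rfl⟩ := ihx
    rcases lt_trichotomy r 0 with hr | hr | hr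
    · refine ⟨(-r) • b, hFc (-r) (by linarith) b hb, (-r) • a, hFc (-r) (by linarith) a ha, ?_⟩
      rw [smul_sub]; rw [neg_smul, neg_smul]; abel
    · exact ⟨0, h0F, 0, h0F, by simp [hr]⟩
    · exact ⟨r • a, hFc r hr a ha, r • b, hFc r hr b hb, by rw [smul_sub]⟩

theorem face_eq_inter {F K : Set E} (hcl : IsClosed K)
    (hconv : Convex ℝ K) (hcone : IsConeSet K) (hF : IsFaceOf F K) (hne : F.Nonempty) :
    K ∩ (Submodule.span ℝ F : Set E) = F := by
  apply Set.Subset.antisymm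
  · rintro y ⟨hyK, hyS⟩
    obtain ⟨a, ha, b, hb, hab⟩ := span_face_sub hcl hconv hcone hF hne y hyS
    have h2y : (2:ℝ) • y ∈ K := hcone 2 (by norm_num) y hyK
    have h2b : (2:ℝ) • b ∈ K := hcone 2 (by norm_num) b (hF.1 hb)
    have hseg : a ∈ openSegment ℝ ((2:ℝ) • y) ((2:ℝ) • b) :=
      ⟨1/2, 1/2, by norm_num, by norm_num, by norm_num, by
        rw [smul_smul, smul_smul]
        norm_num
        rw [hab]; abel⟩
    have h2yF : (2:ℝ) • y ∈ F := (hF.2.2.2 a ha _ h2y _ h2b hseg).1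
    have := face_coneSet hcl hconv hcone hF hne (1/2) (by norm_num) _ h2yF
    rwa [smul_smul, show (1/2 : ℝ) * 2 = 1 by norm_num, one_smul] at this
  · exact fun x hx => ⟨hF.1 hx, Submodule.subset_span hx⟩

theorem perpOf_eq_orth (F : Set E) : PerpOf F = ((Submodule.span ℝ F)ᗮ : Set E) := by
  ext s
  simp only [PerpOf, Set.mem_setOf_eq, SetLike.mem_coe, Submodule.mem_orthogonal]
  constructor
  · intro h u hu
    induction hu using Submodule.span_induction with
    | mem x hx => rw [real_inner_comm]; exact h x hx
    | zero => exact inner_zero_left s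
    | add x y _ _ ihx ihy => rw [inner_add_left, ihx, ihy, add_zero]
    | smul r x _ ihx => rw [real_inner_smul_left, ihx, mul_zero]
  · intro h x hx
    rw [real_inner_comm]
    exact h x (Submodule.subset_span hx)

theorem dualCone'_coneSet (K : Set E) : IsConeSet (DualCone' K) := by
  intro c hc s hs x hx
  rw [real_inner_smul_left]
  exact mul_nonneg hc.le (hs x hx)

theorem dualCone'_add (K : Set E) {s t : E} (hs : s ∈ DualCone' K) (ht : t ∈ DualCone' K) :
    s + t ∈ DualCone' K := fun x hx => by
  rw [inner_add_left]; exact add_nonneg (hs x hx) (ht x hx)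

theorem zero_mem_dualCone' (K : Set E) : (0:E) ∈ DualCone' K := fun x _ => by
  rw [inner_zero_left]

/-- **Proposition.** A closed convex cone `K ⊆ ℝⁿ` is facially dual complete if and only if
for every proper face `F` of `K`, with `L = span F`, the dual cone of `F` computed in `L`
(identifying the quotient `E*/L^⊥` with `L` via orthogonal projection) equals the orthogonal
projection of `K*` onto `L`. -/
theorem FDC_iff_dual_projection (n : ℕ) (K : Set (EuclideanSpace ℝ (Fin n)))
    (hKclosed : IsClosed K) (hKconv : Convex ℝ K) (hKcone : IsConeSet K) :
    IsFDC K ↔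
      ∀ F : Set (EuclideanSpace ℝ (Fin n)), IsProperFaceOf F K →
        {s : EuclideanSpace ℝ (Fin n) | s ∈ Submodule.span ℝ F ∧ ∀ x ∈ F, 0 ≤ ⟪s, x⟫} =
          (fun v => ((Submodule.orthogonalProjection (Submodule.span ℝ F) v :
              Submodule.span ℝ F) : EuclideanSpace ℝ (Fin n))) '' DualCone' K := by
  constructor
  · -- FDC ⟹ projection formula
    intro hFDC F hF
    have hclosedC := hFDC F hF
    obtain ⟨hface, hne, -⟩ := hF
    set L : Submodule ℝ (EuclideanSpace ℝ (Fin n)) := Submodule.span ℝ F with hLdef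
    have hPerp : PerpOf F = (Lᗮ : Set (EuclideanSpace ℝ (Fin n))) := perpOf_eq_orth F
    ext s
    constructor
    · rintro ⟨hsL, hsF⟩
      -- First show `s ∈ K* + F^⊥` using separation.
      have hsC : s ∈ DualCone' K + PerpOf F := by
        by_contra hs
        have hCsmul : ∀ c : ℝ, 0 < c → ∀ v ∈ DualCone' K + PerpOf F,
            c • v ∈ DualCone' K + PerpOf F := by
          intro c hc v hv
          obtain ⟨k, hk, w, hw, rfl⟩ := Set.mem_add.1 hv
          refine Set.mem_add.2 ⟨c • k, dualCone'_coneSet K c hc k hk, c • w, ?_,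
            (smul_add c k w).symm⟩
          intro x hx
          rw [real_inner_smul_left, hw x hx, mul_zero]
        have hCadd : ∀ v ∈ DualCone' K + PerpOf F, ∀ u ∈ DualCone' K + PerpOf F,
            v + u ∈ DualCone' K + PerpOf F := by
          intro v hv u hu
          obtain ⟨k1, hk1, w1, hw1, rfl⟩ := Set.mem_add.1 hv
          obtain ⟨k2, hk2, w2, hw2, rfl⟩ := Set.mem_add.1 hu
          refine Set.mem_add.2 ⟨k1 + k2, dualCone'_add K hk1 hk2, w1 + w2, ?_, by abel⟩
          intro x hx
          rw [inner_add_left, hw1 x hx, hw2 x hx, add_zero]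
        set Cc : ConvexCone ℝ (EuclideanSpace ℝ (Fin n)) :=
          { carrier := DualCone' K + PerpOf F
            smul_mem' := fun {c} hc {v} hv => hCsmul c hc v hv
            add_mem' := fun {v} hv {u} hu => hCadd v hv u hu } with hCc
        have hCne : (Cc : Set (EuclideanSpace ℝ (Fin n))).Nonempty :=
          ⟨0, Set.mem_add.2 ⟨0, zero_mem_dualCone' K, 0, fun x _ => inner_zero_left x,
            add_zero 0⟩⟩
        obtain ⟨y, hy1, hy2⟩ : ∃ y, (∀ x ∈ Cc, 0 ≤ ⟪x, y⟫) ∧ ⟪y, s⟫ < 0 := by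
          obtain ⟨y, h1, h2⟩ := (mkProperCone (Cc : Set (EuclideanSpace ℝ (Fin n)))
            (Set.mem_add.2 ⟨0, zero_mem_dualCone' K, 0, fun x _ => inner_zero_left x, add_zero 0⟩)
            hclosedC (fun v hv u hu => hCadd v hv u hu)
            (fun c hc v hv => hCsmul c hc v hv)).hyperplane_separation' (x₀ := s) hs
          exact ⟨y, h1, by rw [real_inner_comm]; exact h2⟩
        have hKne : K.Nonempty := hne.mono hface.1
        set Kc := mkProperCone K (zero_mem_of_coneSet hKne hKclosed hKconv hKcone) hKclosed
          (fun x hx y hy => (setToCone K hKconv hKcone).add_mem' hx hy) hKcone with hKc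
        have hbi := ProperCone.innerDual_innerDual Kc
        have hyK : y ∈ K := by
          have hy' : y ∈ ProperCone.innerDual ((ProperCone.innerDual
              (Kc : Set (EuclideanSpace ℝ (Fin n))) : Set (EuclideanSpace ℝ (Fin n)))) := by
            intro x hx
            have hxD : x ∈ DualCone' K := fun z hz => by
              rw [real_inner_comm]; exact hx hz
            exact hy1 x (Set.mem_add.2 ⟨x, hxD, 0, fun z _ => inner_zero_left z, add_zero x⟩)
          rw [hbi] at hy'
          exact hy'
        have hyL : y ∈ L := by
          rw [← L.orthogonal_orthogonal]
          refine (Submodule.mem_orthogonal Lᗮ y).2 fun w hw => ?_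
          have hwP : w ∈ PerpOf F := by rw [hPerp]; exact hw
          have hwP' : -w ∈ PerpOf F := by rw [hPerp]; exact Lᗮ.neg_mem hw
          have h1 := hy1 w (Set.mem_add.2 ⟨0, zero_mem_dualCone' K, w, hwP, zero_add w⟩)
          have h2 := hy1 (-w)
            (Set.mem_add.2 ⟨0, zero_mem_dualCone' K, -w, hwP', zero_add (-w)⟩)
          rw [inner_neg_left] at h2
          linarith
        have hyF : y ∈ F := by
          rw [← face_eq_inter hKclosed hKconv hKcone hface hne]
          exact ⟨hyK, hyL⟩
        have h3 := hsF y hyF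
        rw [real_inner_comm] at hy2
        linarith
      obtain ⟨k, hk, w, hw, hkw⟩ := Set.mem_add.1 hsC
      rw [hPerp] at hw
      refine ⟨k, hk, ?_⟩
      have hpw : Submodule.orthogonalProjection L w = 0 :=
        Submodule.orthogonalProjectionOnto_apply_of_mem_orthogonal hw
      have hkk : Submodule.orthogonalProjection L s = Submodule.orthogonalProjection L k := by
        rw [← hkw, map_add, hpw, add_zero]
      show (Submodule.orthogonalProjection L k : EuclideanSpace ℝ (Fin n)) = s
      rw [← hkk]
      exact Submodule.starProjection_eq_self_iff.mpr hsL
    · rintro ⟨k, hk, rfl⟩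
      refine ⟨SetLike.coe_mem (Submodule.orthogonalProjection L k), ?_⟩
      intro x hx
      have hxL : x ∈ L := Submodule.subset_span hx
      have hsub : k - (Submodule.orthogonalProjection L k : EuclideanSpace ℝ (Fin n)) ∈ Lᗮ :=
        Submodule.sub_starProjection_mem_orthogonal k
      have h0 : ⟪k - (Submodule.orthogonalProjection L k : EuclideanSpace ℝ (Fin n)), x⟫ = 0 := by
        rw [real_inner_comm]
        exact (Submodule.mem_orthogonal L _).1 hsub x hxL
      rw [inner_sub_left, sub_eq_zero] at h0
      show (0:ℝ) ≤ ⟪((Submodule.orthogonalProjection L k : L) : EuclideanSpace ℝ (Fin n)), x⟫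
      rw [← h0]
      exact hk x (hface.1 hx)
  · -- projection formula ⟹ FDC
    intro h F hF
    have heq := h F hF
    obtain ⟨hface, hne, -⟩ := hF
    set L : Submodule ℝ (EuclideanSpace ℝ (Fin n)) := Submodule.span ℝ F with hLdef
    set p : EuclideanSpace ℝ (Fin n) → EuclideanSpace ℝ (Fin n) :=
      fun v => ((Submodule.orthogonalProjection L v : L) : EuclideanSpace ℝ (Fin n)) with hpdef
    have hPerp : PerpOf F = (Lᗮ : Set (EuclideanSpace ℝ (Fin n))) := perpOf_eq_orth F
    have hsum : DualCone' K + PerpOf F = p ⁻¹' (p '' DualCone' K) := by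
      ext v
      constructor
      · intro hv
        obtain ⟨k, hk, w, hw, rfl⟩ := Set.mem_add.1 hv
        rw [hPerp] at hw
        refine ⟨k, hk, ?_⟩
        show (Submodule.orthogonalProjection L k : EuclideanSpace ℝ (Fin n)) = p (k + w)
        simp only [hpdef, map_add,
          Submodule.orthogonalProjectionOnto_apply_of_mem_orthogonal hw,
          ZeroMemClass.coe_zero, add_zero]
      · rintro ⟨k, hk, hpk⟩
        refine Set.mem_add.2 ⟨k, hk, v - k, ?_, by abel⟩
        rw [hPerp]
        have h1 : v - p v ∈ Lᗮ := Submodule.sub_starProjection_mem_orthogonal v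
        have h2 : k - p k ∈ Lᗮ := Submodule.sub_starProjection_mem_orthogonal k
        have h3 : v - k = (v - p v) - (k - p k) := by rw [hpk]; abel
        rw [h3]
        exact Lᗮ.sub_mem h1 h2
    have hclosed_img : IsClosed (p '' DualCone' K) := by
      rw [← heq]
      have h4 : {s : EuclideanSpace ℝ (Fin n) | s ∈ Submodule.span ℝ F ∧ ∀ x ∈ F, 0 ≤ ⟪s, x⟫} =
          (L : Set (EuclideanSpace ℝ (Fin n))) ∩
            (ProperCone.innerDual F : Set (EuclideanSpace ℝ (Fin n))) := by
        ext s
        simp only [Set.mem_setOf_eq, Set.mem_inter_iff, SetLike.mem_coe, ProperCone.mem_innerDual]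
        refine and_congr_right fun _ => forall₂_congr fun x _ => ?_
        rw [real_inner_comm]
      rw [h4]
      exact L.closed_of_finiteDimensional.inter (ProperCone.innerDual F).isClosed
    have hpcont : Continuous p :=
      continuous_subtype_val.comp (Submodule.orthogonalProjection L).continuous
    rw [hsum]
    exact hclosed_img.preimage hpcont
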